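/- Let (X,d) be a metric space and G : X → [0,∞) Borel. Then for all x, y ∈ X, d_G(x,y) = inf_{T>0} E_G^T(x,y), where both sides take values in [0,+∞]. -/

import Mathlib

set_option maxHeartbeats 1000000


open MeasureTheory Set Filter
open scoped ENNReal

noncomputable section

/-- `m` is a (nonnegative, integrable) upper speed of the curve `γ` on `[a,b]`:
`dist (γ s) (γ t) ≤ ∫_s^t m` for all `a ≤ s ≤ t ≤ b`. -/
def IsUpperSpeedOn {X : Type*} [MetricSpace X] (γ : ℝ → X) (m : ℝ → ℝ) (a b : ℝ) : Prop :=
  (∀ r ∈ Set.Icc a b, 0 ≤ m r) ∧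
  IntervalIntegrable m MeasureTheory.volume a b ∧
  ∀ s t : ℝ, a ≤ s → s ≤ t → t ≤ b → dist (γ s) (γ t) ≤ ∫ r in s..t, m r

/-- The Finsler cost `d_G(x,y)`: the infimum of `∫_0^1 m(t) G(γ(t)) dt` over continuous
curves `γ : [0,1] → X` joining `x` to `y` with integrable upper speed `m`;
`+∞` if no admissible pair exists. -/
def finslerCost {X : Type*} [MetricSpace X] (G : X → ℝ) (x y : X) : ℝ≥0∞ :=
  sInf { c : ℝ≥0∞ | ∃ γ : ℝ → X, ∃ m : ℝ → ℝ,
    ContinuousOn γ (Set.Icc 0 1) ∧ γ 0 = x ∧ γ 1 = y ∧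
    IsUpperSpeedOn γ m 0 1 ∧
    c = ∫⁻ t in Set.Ioc (0:ℝ) 1, ENNReal.ofReal (m t * G (γ t)) }

/-- The action `E_G^T(x,y)`: the infimum of `∫_0^T ((1/2) m(t)² + (1/2) G(γ(t))²) dt` over
continuous curves `γ : [0,T] → X` joining `x` to `y` with square-integrable upper speed `m`;
`+∞` if no admissible pair exists. -/
def actionCost {X : Type*} [MetricSpace X] (G : X → ℝ) (T : ℝ) (x y : X) : ℝ≥0∞ :=
  sInf { c : ℝ≥0∞ | ∃ γ : ℝ → X, ∃ m : ℝ → ℝ,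
    ContinuousOn γ (Set.Icc 0 T) ∧ γ 0 = x ∧ γ T = y ∧
    IsUpperSpeedOn γ m 0 T ∧
    IntervalIntegrable (fun t => (m t) ^ 2) MeasureTheory.volume 0 T ∧
    c = ∫⁻ t in Set.Ioc (0:ℝ) T,
          ENNReal.ofReal ((1/2) * (m t) ^ 2 + (1/2) * (G (γ t)) ^ 2) }

/-- `G` is a strong upper gradient of `v`: along every continuous curve with integrable
upper speed `m`, `|v(γ t) − v(γ s)| ≤ ∫_s^t G(γ r) m(r) dr` (the right-hand side taken as a
possibly infinite nonnegative integral). -/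
def IsStrongUpperGradient {X : Type*} [MetricSpace X] (G v : X → ℝ) : Prop :=
  ∀ (a b : ℝ) (γ : ℝ → X) (m : ℝ → ℝ),
    ContinuousOn γ (Set.Icc a b) → IsUpperSpeedOn γ m a b →
    ∀ s t : ℝ, a ≤ s → s ≤ t → t ≤ b →
      ENNReal.ofReal |v (γ t) - v (γ s)| ≤
        ∫⁻ r in Set.Ioc s t, ENNReal.ofReal (G (γ r) * m r)

/-- A gradient-flow curve (curve of maximal slope in energy-dissipation form) of `v` with
respect to `G`: `η` is continuous on `[0,∞)`, `G∘η` is square-integrable on compacts and is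
an upper speed of `η` on every compact subinterval of `[0,∞)`, and the energy-dissipation
equality `v(η s) − v(η t) = ∫_s^t G(η r)² dr` holds for `0 ≤ s ≤ t`. -/
def IsGradientFlowCurve {X : Type*} [MetricSpace X] (v G : X → ℝ) (η : ℝ → X) : Prop :=
  ContinuousOn η (Set.Ici 0) ∧
  (∀ b : ℝ, 0 ≤ b → IntervalIntegrable (fun t => (G (η t)) ^ 2) MeasureTheory.volume 0 b) ∧
  (∀ a b : ℝ, 0 ≤ a → a ≤ b → IsUpperSpeedOn η (fun t => G (η t)) a b) ∧
  ∀ s t : ℝ, 0 ≤ s → s ≤ t → v (η s) - v (η t) = ∫ r in s..t, (G (η r)) ^ 2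

lemma clamp_cont (a b : ℝ) : Continuous (fun t : ℝ => max a (min t b)) :=
  continuous_const.max (continuous_id.min continuous_const)

lemma clamp_mem {a b : ℝ} (hab : a ≤ b) (t : ℝ) : max a (min t b) ∈ Icc a b :=
  ⟨le_max_left _ _, max_le (hab) (min_le_right _ _)⟩

lemma clamp_eq {a b t : ℝ} (ha : a ≤ t) (hb : t ≤ b) : max a (min t b) = t := by
  rw [min_eq_left hb, max_eq_right ha]

lemma finsler_le_of_action {X : Type*} [MetricSpace X] [MeasurableSpace X] [BorelSpace X]
    (G : X → ℝ) (hGmeas : Measurable G) (x y : X) {T : ℝ} (hT : 0 < T)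
    (γ : ℝ → X) (m : ℝ → ℝ) (hγ : ContinuousOn γ (Set.Icc 0 T)) (h0 : γ 0 = x) (h1 : γ T = y)
    (hup : IsUpperSpeedOn γ m 0 T) :
    finslerCost G x y ≤
      ∫⁻ t in Set.Ioc (0:ℝ) T, ENNReal.ofReal ((1/2) * (m t) ^ 2 + (1/2) * (G (γ t)) ^ 2) := by
  obtain ⟨hm0, hmi, hmd⟩ := hup
  set γ' : ℝ → X := fun t => γ (T * t) with hγ'def
  set m' : ℝ → ℝ := fun t => T * m (T * t) with hm'def
  have hmaps : ∀ t ∈ Icc (0:ℝ) 1, T * t ∈ Icc 0 T := by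
    intro t ht
    exact ⟨mul_nonneg hT.le ht.1, by simpa [mul_comm] using mul_le_of_le_one_left hT.le ht.2⟩
  have hγ'cont : ContinuousOn γ' (Icc 0 1) :=
    hγ.comp (continuous_const.mul continuous_id).continuousOn hmaps
  have hup' : IsUpperSpeedOn γ' m' 0 1 := by
    refine ⟨fun r hr => mul_nonneg hT.le (hm0 _ (hmaps r hr)), ?_, ?_⟩
    · have := (hmi.comp_mul_left (c := T)).const_mul T
      simpa [zero_div, div_self hT.ne'] using this
    · intro s t hs hst ht1
      have hTs : (0:ℝ) ≤ T * s := mul_nonneg hT.le hs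
      have hTst : T * s ≤ T * t := by nlinarith
      have hTt : T * t ≤ T := by nlinarith
      have hd := hmd (T * s) (T * t) hTs hTst hTt
      have : ∫ r in s..t, m' r = ∫ r in T*s..T*t, m r := by
        rw [hm'def]
        rw [intervalIntegral.integral_const_mul, intervalIntegral.integral_comp_mul_left _ hT.ne',
          smul_eq_mul, ← mul_assoc, mul_inv_cancel₀ hT.ne', one_mul]
      rw [this]; exact hd
  -- the value of the reparametrized curve
  have hmem : (∫⁻ t in Set.Ioc (0:ℝ) 1, ENNReal.ofReal (m' t * G (γ' t))) ∈
      { c : ℝ≥0∞ | ∃ γ : ℝ → X, ∃ m : ℝ → ℝ,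
        ContinuousOn γ (Set.Icc 0 1) ∧ γ 0 = x ∧ γ 1 = y ∧
        IsUpperSpeedOn γ m 0 1 ∧
        c = ∫⁻ t in Set.Ioc (0:ℝ) 1, ENNReal.ofReal (m t * G (γ t)) } := by
    exact ⟨γ', m', hγ'cont, by simp [hγ'def, h0], by simp [hγ'def, h1], hup', rfl⟩
  refine le_trans (sInf_le hmem) ?_
  -- change of variables
  set Γ : ℝ → X := fun u => γ (max 0 (min u T)) with hΓdef
  have hΓcont : Continuous Γ := by
    exact hγ.comp_continuous (clamp_cont 0 T) (fun u => clamp_mem hT.le u)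
  have hΓeq : ∀ u ∈ Icc (0:ℝ) T, Γ u = γ u := fun u hu => by
    rw [hΓdef]; simp only []; rw [clamp_eq hu.1 hu.2]
  set F : ℝ → ℝ≥0∞ := fun u => ENNReal.ofReal (m u * G (Γ u)) with hFdef
  have hmae : AEMeasurable m (volume.restrict (Ioc 0 T)) := hmi.1.aemeasurable
  have hFae : AEMeasurable F (volume.restrict (Ioc 0 T)) :=
    ENNReal.measurable_ofReal.comp_aemeasurable
      (hmae.mul ((hGmeas.comp (hΓcont.measurable)).aemeasurable))
  have hpre : Ioc (0:ℝ) 1 = (fun t => T * t) ⁻¹' (Ioc 0 T) := by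
    ext t
    simp only [Set.mem_Ioc, Set.mem_preimage]
    constructor
    · rintro ⟨h1, h2⟩; exact ⟨by positivity, by nlinarith⟩
    · rintro ⟨h1, h2⟩; constructor
      · by_contra hc; push_neg at hc; nlinarith
      · by_contra hc; push_neg at hc; nlinarith
  have hmap : Measure.map (fun t => T * t) (volume.restrict (Ioc 0 1)) =
      ENNReal.ofReal T⁻¹ • volume.restrict (Ioc 0 T) := by
    rw [hpre, ← Measure.restrict_map (measurable_const_mul T) measurableSet_Ioc,
      Real.map_volume_mul_left hT.ne', Measure.restrict_smul, abs_of_pos (inv_pos.mpr hT)]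
  have hFmap : AEMeasurable F (Measure.map (fun t => T * t) (volume.restrict (Ioc 0 1))) := by
    rw [hmap]; exact hFae.smul_measure _
  have step1 : (∫⁻ t in Set.Ioc (0:ℝ) 1, ENNReal.ofReal (m' t * G (γ' t))) =
      ∫⁻ t in Set.Ioc (0:ℝ) 1, ENNReal.ofReal T * F (T * t) := by
    refine setLIntegral_congr_fun measurableSet_Ioc (fun t ht => ?_)
    have h1 : T * t ∈ Icc (0:ℝ) T := hmaps t (Ioc_subset_Icc_self ht)
    rw [hFdef]; simp only []
    rw [hΓeq _ h1, ← ENNReal.ofReal_mul hT.le]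
    congr 1; rw [hγ'def, hm'def]; ring
  have step2 : (∫⁻ t in Set.Ioc (0:ℝ) 1, ENNReal.ofReal T * F (T * t)) =
      ENNReal.ofReal T * ∫⁻ t in Set.Ioc (0:ℝ) 1, F (T * t) :=
    lintegral_const_mul' _ _ ENNReal.ofReal_ne_top
  have step3 : (∫⁻ t in Set.Ioc (0:ℝ) 1, F (T * t)) =
      ENNReal.ofReal T⁻¹ * ∫⁻ u in Set.Ioc (0:ℝ) T, F u := by
    rw [← lintegral_map' hFmap (measurable_const_mul T).aemeasurable, hmap,
      lintegral_smul_measure, smul_eq_mul]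
  have step4 : ENNReal.ofReal T * (ENNReal.ofReal T⁻¹ * ∫⁻ u in Set.Ioc (0:ℝ) T, F u) =
      ∫⁻ u in Set.Ioc (0:ℝ) T, F u := by
    rw [← mul_assoc, ← ENNReal.ofReal_mul hT.le, mul_inv_cancel₀ hT.ne', ENNReal.ofReal_one,
      one_mul]
  rw [step1, step2, step3, step4]
  have step5 : (∫⁻ u in Set.Ioc (0:ℝ) T, F u) =
      ∫⁻ u in Set.Ioc (0:ℝ) T, ENNReal.ofReal (m u * G (γ u)) :=
    setLIntegral_congr_fun measurableSet_Ioc (fun u hu => by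
      rw [hFdef]; simp only []; rw [hΓeq _ (Ioc_subset_Icc_self hu)])
  rw [step5]
  refine lintegral_mono fun u => ENNReal.ofReal_le_ofReal ?_
  nlinarith [sq_nonneg (m u - G (γ u))]

lemma action_key {X : Type*} [MetricSpace X] [MeasurableSpace X] [BorelSpace X]
    (G : X → ℝ) (hG0 : ∀ x, 0 ≤ G x) (hGmeas : Measurable G) (x y : X)
    (γ : ℝ → X) (m : ℝ → ℝ) (hγ : ContinuousOn γ (Set.Icc 0 1))
    (h0 : γ 0 = x) (h1 : γ 1 = y)
    (hm0 : ∀ r ∈ Set.Icc (0:ℝ) 1, 0 ≤ m r) (hmi : IntervalIntegrable m volume 0 1)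
    (hmd : ∀ s t : ℝ, 0 ≤ s → s ≤ t → t ≤ 1 → dist (γ s) (γ t) ≤ ∫ r in s..t, m r)
    (hC : (∫⁻ t in Set.Ioc (0:ℝ) 1, ENNReal.ofReal (m t * G (γ t))) ≠ ⊤)
    (hmne : ¬ (m =ᵐ[volume.restrict (Set.Ioc (0:ℝ) 1)] 0))
    {δ : ℝ} (hδ : 0 < δ) :
    (⨅ (T : ℝ) (_ : 0 < T), actionCost G T x y) ≤
      (∫⁻ t in Set.Ioc (0:ℝ) 1, ENNReal.ofReal (m t * G (γ t))) +
        ENNReal.ofReal δ * ∫⁻ t in Set.Ioc (0:ℝ) 1, ENNReal.ofReal (m t) := by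
  obtain ⟨Γ, hΓdef⟩ : ∃ Γ' : ℝ → X, Γ' = fun u => γ (max 0 (min u 1)) := ⟨_, rfl⟩
  have hΓcont : Continuous Γ := hΓdef ▸ hγ.comp_continuous (clamp_cont 0 1) (fun u => clamp_mem zero_le_one u)
  have hΓeq : ∀ u ∈ Icc (0:ℝ) 1, Γ u = γ u := fun u hu => by
    rw [hΓdef]; simp only []; rw [clamp_eq hu.1 hu.2]
  obtain ⟨g, hgdef⟩ : ∃ g' : ℝ → ℝ, g' = fun u => G (Γ u) := ⟨_, rfl⟩
  have hgmeas : Measurable g := hgdef ▸ hGmeas.comp hΓcont.measurable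
  have hg0 : ∀ t, 0 ≤ g t := fun t => hgdef ▸ hG0 _
  have hgδ : ∀ t, (0:ℝ) < g t + δ := fun t => add_pos_of_nonneg_of_pos (hg0 t) hδ
  obtain ⟨h, hhdef⟩ : ∃ h' : ℝ → ℝ, h' = fun t => m t / (g t + δ) := ⟨_, rfl⟩
  have hmh : ∀ t, m t = h t * (g t + δ) := fun t => by
    rw [hhdef]; exact (div_mul_cancel₀ _ (hgδ t).ne').symm
  have hmIoc : IntegrableOn m (Ioc 0 1) volume := hmi.1
  have hmIcc : IntegrableOn m (Icc 0 1) volume := by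
    rwa [IntegrableOn, Measure.restrict_congr_set Ioc_ae_eq_Icc] at hmIoc
  have hg1 : Integrable (fun t => |m t| / δ) (volume.restrict (Icc (0:ℝ) 1)) :=
    hmIcc.abs.div_const δ
  have hg2 : AEStronglyMeasurable h (volume.restrict (Icc (0:ℝ) 1)) := by
    rw [hhdef]; simp only [div_eq_mul_inv]
    exact hmIcc.aestronglyMeasurable.mul (hgmeas.add measurable_const).inv.aestronglyMeasurable
  have hhIcc : IntegrableOn h (Icc 0 1) volume := by
    refine hg1.mono' hg2 (ae_of_all _ fun t => ?_)
    rw [hhdef]; simp only [norm_div, Real.norm_eq_abs]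
    rw [abs_of_pos (hgδ t)]
    exact div_le_div_of_nonneg_left (abs_nonneg _) hδ (by linarith [hg0 t])
  have hhiv : IntervalIntegrable h volume 0 1 := by
    have h1 : IntegrableOn h (uIcc (0:ℝ) 1) volume := by
      rwa [uIcc_of_le (zero_le_one' ℝ)]
    exact h1.intervalIntegrable
  have hh0 : ∀ t ∈ Icc (0:ℝ) 1, 0 ≤ h t := fun t ht => by
    rw [hhdef]; exact div_nonneg (hm0 t ht) (hgδ t).le
  obtain ⟨φ, hφdef⟩ : ∃ φ' : ℝ → ℝ, φ' = fun t => ∫ r in (0:ℝ)..t, h r := ⟨_, rfl⟩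
  have hφ0 : φ 0 = 0 := by rw [hφdef]; exact intervalIntegral.integral_same
  have hhsub : ∀ c d : ℝ, 0 ≤ c → c ≤ d → d ≤ 1 → IntervalIntegrable h volume c d := by
    intro c d hc hcd hd
    refine hhiv.mono_set (uIcc_subset_uIcc_iff_le.mpr ⟨?_, ?_⟩)
    · rw [min_eq_left (zero_le_one' ℝ), min_eq_left hcd]; exact hc
    · rw [max_eq_right (zero_le_one' ℝ), max_eq_right hcd]; exact hd
  have hφsub : ∀ c d : ℝ, 0 ≤ c → c ≤ d → d ≤ 1 → φ d - φ c = ∫ r in c..d, h r := by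
    intro c d hc hcd hd
    rw [hφdef]; simp only []
    exact intervalIntegral.integral_interval_sub_left (hhsub 0 d le_rfl (by linarith) hd)
      (hhsub 0 c le_rfl hc (by linarith))
  have hφmono : ∀ c d : ℝ, 0 ≤ c → c ≤ d → d ≤ 1 → φ c ≤ φ d := by
    intro c d hc hcd hd
    have h1 := hφsub c d hc hcd hd
    have h2 : 0 ≤ ∫ r in c..d, h r :=
      intervalIntegral.integral_nonneg hcd (fun u hu => hh0 u ⟨hc.trans hu.1, hu.2.trans hd⟩)
    linarith
  have hφcont : ContinuousOn φ (Icc 0 1) := by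
    rw [hφdef]
    have h1 : IntegrableOn h (uIcc (0:ℝ) 1) volume := by
      rwa [uIcc_of_le (zero_le_one' ℝ)]
    rw [show Icc (0:ℝ) 1 = uIcc (0:ℝ) 1 from (uIcc_of_le (zero_le_one' ℝ)).symm]
    exact intervalIntegral.continuousOn_primitive_interval h1
  have hT0 : 0 ≤ φ 1 := by
    have := hφmono 0 1 le_rfl zero_le_one le_rfl; rw [hφ0] at this; exact this
  have hφmem : ∀ t ∈ Icc (0:ℝ) 1, φ t ∈ Icc 0 (φ 1) := by
    intro t ht
    constructor
    · have := hφmono 0 t le_rfl ht.1 ht.2; rwa [hφ0] at this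
    · exact hφmono t 1 ht.1 ht.2 le_rfl
  obtain ⟨ψ, hψdef⟩ : ∃ ψ' : ℝ → ℝ,
      ψ' = fun u => sInf ({1} ∪ {t | t ∈ Icc (0:ℝ) 1 ∧ u ≤ φ t}) := ⟨_, rfl⟩
  have hSne : ∀ u : ℝ, ({1} ∪ {t | t ∈ Icc (0:ℝ) 1 ∧ u ≤ φ t} : Set ℝ).Nonempty :=
    fun u => ⟨1, Or.inl rfl⟩
  have hSbdd : ∀ u : ℝ, BddBelow ({1} ∪ {t | t ∈ Icc (0:ℝ) 1 ∧ u ≤ φ t} : Set ℝ) := by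
    intro u
    refine ⟨0, ?_⟩
    rintro t (rfl | ⟨ht, _⟩)
    · exact zero_le_one
    · exact ht.1
  have hSclosed : ∀ u : ℝ, IsClosed ({1} ∪ {t | t ∈ Icc (0:ℝ) 1 ∧ u ≤ φ t} : Set ℝ) := by
    intro u
    refine isClosed_singleton.union ?_
    have : {t | t ∈ Icc (0:ℝ) 1 ∧ u ≤ φ t} = Icc 0 1 ∩ φ ⁻¹' (Ici u) := by
      ext t; simp [Set.mem_Ici, and_comm]
    rw [this]
    exact hφcont.preimage_isClosed_of_isClosed isClosed_Icc isClosed_Ici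
  have hψmem : ∀ u, ψ u ∈ ({1} ∪ {t | t ∈ Icc (0:ℝ) 1 ∧ u ≤ φ t} : Set ℝ) := by
    intro u; rw [hψdef]; exact (hSclosed u).csInf_mem (hSne u) (hSbdd u)
  have hψ01 : ∀ u, ψ u ∈ Icc (0:ℝ) 1 := by
    intro u
    constructor
    · rw [hψdef]
      refine le_csInf (hSne u) ?_
      rintro t (rfl | ⟨ht, _⟩)
      · exact zero_le_one
      · exact ht.1
    · rw [hψdef]
      exact csInf_le (hSbdd u) (Or.inl rfl)
  have hψmono : Monotone ψ := by
    intro u v huv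
    rw [hψdef]
    refine csInf_le_csInf (hSbdd u) (hSne v) ?_
    rintro t (rfl | ⟨ht1, ht2⟩)
    · exact Or.inl rfl
    · exact Or.inr ⟨ht1, huv.trans ht2⟩
  have hψmeas : Measurable ψ := hψmono.measurable
  have hφψge : ∀ u ∈ Icc (0:ℝ) (φ 1), u ≤ φ (ψ u) := by
    intro u hu
    rcases hψmem u with h' | h'
    · rw [mem_singleton_iff] at h'; rw [h']; exact hu.2
    · exact h'.2
  have hφψeq : ∀ u ∈ Icc (0:ℝ) (φ 1), φ (ψ u) = u := by
    intro u hu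
    have hIcc : Icc (0:ℝ) (ψ u) ⊆ Icc 0 1 := Icc_subset_Icc le_rfl (hψ01 u).2
    have hIVT := intermediate_value_Icc (hψ01 u).1 (hφcont.mono hIcc)
    have humem : u ∈ Icc (φ 0) (φ (ψ u)) := ⟨by rw [hφ0]; exact hu.1, hφψge u hu⟩
    obtain ⟨t, ht, hφt⟩ := hIVT humem
    have h1 : ψ u ≤ t := by
      rw [hψdef]
      exact csInf_le (hSbdd u) (Or.inr ⟨⟨ht.1, ht.2.trans (hψ01 u).2⟩, hφt ▸ le_rfl⟩)
    have h2 : t = ψ u := le_antisymm ht.2 h1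
    rw [← h2, hφt]
  have hψle : ∀ u ∈ Icc (0:ℝ) (φ 1), ∀ b ∈ Icc (0:ℝ) 1, (ψ u ≤ b ↔ u ≤ φ b) := by
    intro u hu b hb
    constructor
    · intro hh
      rw [← hφψeq u hu]
      exact hφmono (ψ u) b (hψ01 u).1 hh hb.2
    · intro hh
      rw [hψdef]
      exact csInf_le (hSbdd u) (Or.inr ⟨hb, hh⟩)
  have hψ0 : ψ 0 = 0 :=
    le_antisymm ((hψle 0 ⟨le_rfl, hT0⟩ 0 ⟨le_rfl, zero_le_one⟩).mpr (le_of_eq hφ0.symm))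
      (hψ01 0).1
  have hcollapse : ∀ t ∈ Icc (0:ℝ) 1, γ (ψ (φ t)) = γ t := by
    intro t ht
    have hφt : φ t ∈ Icc 0 (φ 1) := hφmem t ht
    have ht' : ψ (φ t) ≤ t := (hψle (φ t) hφt t ht).mpr le_rfl
    have h01 : ψ (φ t) ∈ Icc (0:ℝ) 1 := hψ01 _
    have hφeq : φ (ψ (φ t)) = φ t := hφψeq _ hφt
    have hint : (∫ r in (ψ (φ t))..t, h r) = 0 := by
      have hsub := hφsub (ψ (φ t)) t h01.1 ht' ht.2
      rw [hφeq] at hsub; linarith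
    have hhae : h =ᵐ[volume.restrict (Ioc (ψ (φ t)) t)] 0 := by
      have hnn : 0 ≤ᵐ[volume.restrict (Ioc (ψ (φ t)) t)] h :=
        (ae_restrict_iff' measurableSet_Ioc).mpr (ae_of_all _ fun u hu =>
          hh0 u ⟨h01.1.trans hu.1.le, hu.2.trans ht.2⟩)
      have hint' : (∫ u in Ioc (ψ (φ t)) t, h u) = 0 := by
        rw [← intervalIntegral.integral_of_le ht']; exact hint
      exact (integral_eq_zero_iff_of_nonneg_ae hnn ((hhsub _ t h01.1 ht' ht.2).1)).mp hint'
    have hmae0 : m =ᵐ[volume.restrict (Ioc (ψ (φ t)) t)] 0 := by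
      filter_upwards [hhae] with u hu
      rw [hmh u, hu]; simp
    have hmint0 : (∫ r in (ψ (φ t))..t, m r) = 0 := by
      rw [intervalIntegral.integral_of_le ht', integral_eq_zero_of_ae hmae0]
    have hdist := hmd (ψ (φ t)) t h01.1 ht' ht.2
    rw [hmint0] at hdist
    exact dist_le_zero.mp hdist
  have hIocφ : ∀ c d : ℝ, c ∈ Icc (0:ℝ) 1 → d ∈ Icc (0:ℝ) 1 →
      (∫⁻ u in Ioc c d, ENNReal.ofReal (h u)) = ENNReal.ofReal (φ d - φ c) := by
    intro c d hc hd
    rcases le_or_gt c d with hcd | hdc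
    · have hint : IntegrableOn h (Ioc c d) volume := (hhsub c d hc.1 hcd hd.2).1
      have hnn : 0 ≤ᵐ[volume.restrict (Ioc c d)] h :=
        (ae_restrict_iff' measurableSet_Ioc).mpr (ae_of_all _ fun u hu =>
          hh0 u ⟨hc.1.trans hu.1.le, hu.2.trans hd.2⟩)
      rw [← ofReal_integral_eq_lintegral_ofReal hint hnn,
        hφsub c d hc.1 hcd hd.2, intervalIntegral.integral_of_le hcd]
    · rw [Ioc_eq_empty (not_lt.mpr hdc.le), Measure.restrict_empty, lintegral_zero_measure,
        eq_comm, ENNReal.ofReal_eq_zero]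
      have := hφmono d c hd.1 hdc.le hc.2; linarith
  have hclampl : ∀ a u : ℝ, 0 < u → u ≤ 1 → (a < u ↔ max 0 (min a 1) < u) := by
    intro a u hu0 hu1
    constructor
    · intro hh
      rcases le_total a 0 with h'|h'
      · rwa [min_eq_left (h'.trans zero_le_one), max_eq_left h']
      · rw [max_eq_right (le_min h' zero_le_one)]
        exact lt_of_le_of_lt (min_le_left a 1) hh
    · intro hh
      rcases le_total a 1 with h'|h'
      · rw [min_eq_left h'] at hh
        exact lt_of_le_of_lt (le_max_right 0 a) hh
      · rw [min_eq_right h', max_eq_right zero_le_one] at hh; linarith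
  have hclampr : ∀ b u : ℝ, 0 < u → u ≤ 1 → (u ≤ b ↔ u ≤ max 0 (min b 1)) := by
    intro b u hu0 hu1
    constructor
    · intro hh
      exact le_max_of_le_right (le_min hh hu1)
    · intro hh
      rcases le_total (min b 1) 0 with h'|h'
      · rw [max_eq_left h'] at hh; linarith
      · rw [max_eq_right h'] at hh; exact hh.trans (min_le_left b 1)
  have hψpos : ∀ u : ℝ, 0 < u → u ≤ φ 1 → 0 < ψ u := by
    intro u hu0 huT
    rcases lt_or_eq_of_le (hψ01 u).1 with h'|h'
    · exact h'
    · exfalso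
      have := hφψeq u ⟨hu0.le, huT⟩
      rw [← h', hφ0] at this; linarith
  have hkey : ∀ u : ℝ, 0 < u → u ≤ φ 1 → ∀ b : ℝ,
      (ψ u ≤ b ↔ u ≤ φ (max 0 (min b 1))) := by
    intro u hu0 huT b
    have huI : u ∈ Icc (0:ℝ) (φ 1) := ⟨hu0.le, huT⟩
    rw [← hψle u huI _ (clamp_mem zero_le_one b)]
    exact hclampr b (ψ u) (hψpos u hu0 huT) (hψ01 u).2
  have hmap : ∀ s s' : ℝ, 0 ≤ s → s ≤ s' → s' ≤ φ 1 →
      Measure.map ψ (volume.restrict (Ioc s s')) =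
        (volume.restrict (Ioc (ψ s) (ψ s'))).withDensity (fun t => ENNReal.ofReal (h t)) := by
    intro s s' hs hss' hs'
    haveI hfin : IsFiniteMeasure (volume.restrict (Ioc s s')) :=
      ⟨by rw [Measure.restrict_apply_univ, Real.volume_Ioc]; exact ENNReal.ofReal_lt_top⟩
    haveI hfin2 : IsFiniteMeasure (Measure.map ψ (volume.restrict (Ioc s s'))) := by
      refine ⟨?_⟩
      rw [Measure.map_apply hψmeas MeasurableSet.univ, preimage_univ]
      exact measure_lt_top _ _
    refine Measure.ext_of_Ioc_finite _ _ ?_ (fun a b hab => ?_)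
    · rw [Measure.map_apply hψmeas MeasurableSet.univ, preimage_univ,
        Measure.restrict_apply_univ, Real.volume_Ioc,
        withDensity_apply _ MeasurableSet.univ, Measure.restrict_univ,
        hIocφ (ψ s) (ψ s') (hψ01 s) (hψ01 s'),
        hφψeq s ⟨hs, hss'.trans hs'⟩, hφψeq s' ⟨hs.trans hss', hs'⟩]
    · have hset : ψ ⁻¹' (Ioc a b) ∩ Ioc s s' =
          Ioc (max s (φ (max 0 (min a 1)))) (min s' (φ (max 0 (min b 1)))) := by
        ext u
        simp only [mem_inter_iff, mem_preimage, mem_Ioc]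
        constructor
        · rintro ⟨⟨hau, hub⟩, hsu, hus'⟩
          have hu0 : 0 < u := lt_of_le_of_lt hs hsu
          have huT : u ≤ φ 1 := hus'.trans hs'
          refine ⟨max_lt hsu ?_, le_min hus' ((hkey u hu0 huT b).mp hub)⟩
          by_contra hc; push_neg at hc
          exact absurd ((hkey u hu0 huT a).mpr hc) (not_le.mpr hau)
        · rintro ⟨hmax, hmin⟩
          rw [max_lt_iff] at hmax; rw [le_min_iff] at hmin
          have hu0 : 0 < u := lt_of_le_of_lt hs hmax.1
          have huT : u ≤ φ 1 := hmin.1.trans hs'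
          refine ⟨⟨?_, (hkey u hu0 huT b).mpr hmin.2⟩, hmax.1, hmin.1⟩
          by_contra hc; push_neg at hc
          exact absurd ((hkey u hu0 huT a).mp hc) (not_le.mpr hmax.2)
      have hmema : max 0 (min a 1) ∈ Icc (0:ℝ) 1 := clamp_mem zero_le_one a
      have hmemb : max 0 (min b 1) ∈ Icc (0:ℝ) 1 := clamp_mem zero_le_one b
      have hset2 : Ioc (max a (ψ s)) (min b (ψ s')) =
          Ioc (max (max 0 (min a 1)) (ψ s)) (min (max 0 (min b 1)) (ψ s')) := by
        ext u
        simp only [mem_Ioc]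
        constructor
        · rintro ⟨h1, h2⟩
          have h1a : a < u := lt_of_le_of_lt (le_max_left _ _) h1
          have h1b : ψ s < u := lt_of_le_of_lt (le_max_right _ _) h1
          have h2a : u ≤ b := h2.trans (min_le_left _ _)
          have h2b : u ≤ ψ s' := h2.trans (min_le_right _ _)
          have hu0 : 0 < u := lt_of_le_of_lt (hψ01 s).1 h1b
          have hu1 : u ≤ 1 := h2b.trans (hψ01 s').2
          exact ⟨max_lt ((hclampl a u hu0 hu1).mp h1a) h1b,
            le_min ((hclampr b u hu0 hu1).mp h2a) h2b⟩
        · rintro ⟨h1, h2⟩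
          have h1a : max 0 (min a 1) < u := lt_of_le_of_lt (le_max_left _ _) h1
          have h1b : ψ s < u := lt_of_le_of_lt (le_max_right _ _) h1
          have h2a : u ≤ max 0 (min b 1) := h2.trans (min_le_left _ _)
          have h2b : u ≤ ψ s' := h2.trans (min_le_right _ _)
          have hu0 : 0 < u := lt_of_le_of_lt (hψ01 s).1 h1b
          have hu1 : u ≤ 1 := h2b.trans (hψ01 s').2
          exact ⟨max_lt ((hclampl a u hu0 hu1).mpr h1a) h1b,
            le_min ((hclampr b u hu0 hu1).mpr h2a) h2b⟩
      have hmem1 : max (max 0 (min a 1)) (ψ s) ∈ Icc (0:ℝ) 1 :=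
        ⟨le_max_of_le_left hmema.1, max_le hmema.2 (hψ01 s).2⟩
      have hmem2 : min (max 0 (min b 1)) (ψ s') ∈ Icc (0:ℝ) 1 :=
        ⟨le_min hmemb.1 (hψ01 s').1, min_le_of_left_le hmemb.2⟩
      have hφmax : φ (max (max 0 (min a 1)) (ψ s)) = max (φ (max 0 (min a 1))) (φ (ψ s)) := by
        rcases le_total (max 0 (min a 1)) (ψ s) with h'|h'
        · rw [max_eq_right h', max_eq_right (hφmono _ _ hmema.1 h' (hψ01 s).2)]
        · rw [max_eq_left h', max_eq_left (hφmono _ _ (hψ01 s).1 h' hmema.2)]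
      have hφmin : φ (min (max 0 (min b 1)) (ψ s')) = min (φ (max 0 (min b 1))) (φ (ψ s')) := by
        rcases le_total (max 0 (min b 1)) (ψ s') with h'|h'
        · rw [min_eq_left h', min_eq_left (hφmono _ _ hmemb.1 h' (hψ01 s').2)]
        · rw [min_eq_right h', min_eq_right (hφmono _ _ (hψ01 s').1 h' hmemb.2)]
      rw [Measure.map_apply hψmeas measurableSet_Ioc,
        Measure.restrict_apply (hψmeas measurableSet_Ioc), hset, Real.volume_Ioc,
        withDensity_apply _ measurableSet_Ioc, Measure.restrict_restrict measurableSet_Ioc,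
        Set.Ioc_inter_Ioc, hset2, hIocφ _ _ hmem1 hmem2, hφmax, hφmin,
        hφψeq s ⟨hs, hss'.trans hs'⟩, hφψeq s' ⟨hs.trans hss', hs'⟩,
        max_comm (φ (max 0 (min a 1))) s, min_comm (φ (max 0 (min b 1))) s']
  obtain ⟨γ2, hγ2def⟩ : ∃ γ' : ℝ → X, γ' = fun u => Γ (ψ u) := ⟨_, rfl⟩
  obtain ⟨m2, hm2def⟩ : ∃ m' : ℝ → ℝ, m' = fun u => g (ψ u) + δ := ⟨_, rfl⟩
  have hm2meas : Measurable m2 := by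
    rw [hm2def]; exact (hgmeas.comp hψmeas).add_const δ
  have hm2nn : ∀ u, 0 ≤ m2 u := fun u => by
    rw [hm2def]; exact add_nonneg (hg0 _) hδ.le
  have hsubIcc : ∀ s s' : ℝ, Ioc (ψ s) (ψ s') ⊆ Icc (0:ℝ) 1 := fun s s' u hu =>
    ⟨(hψ01 s).1.trans hu.1.le, hu.2.trans (hψ01 s').2⟩
  have hhaem : ∀ s s' : ℝ, AEMeasurable (fun t => ENNReal.ofReal (h t))
      (volume.restrict (Ioc (ψ s) (ψ s'))) := by
    intro s s'
    have h1 : AEMeasurable h (volume.restrict (Ioc (ψ s) (ψ s'))) :=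
      hg2.aemeasurable.mono_measure (Measure.restrict_mono (hsubIcc s s') le_rfl)
    exact ENNReal.measurable_ofReal.comp_aemeasurable h1
  have hCoV : ∀ (f : ℝ → ℝ≥0∞), Measurable f → ∀ s s' : ℝ, 0 ≤ s → s ≤ s' → s' ≤ φ 1 →
      (∫⁻ u in Ioc s s', f (ψ u)) =
        ∫⁻ t in Ioc (ψ s) (ψ s'), f t * ENNReal.ofReal (h t) := by
    intro f hf s s' hs hss' hs'
    rw [← lintegral_map hf hψmeas, hmap s s' hs hss' hs',
      lintegral_withDensity_eq_lintegral_mul₀ (hhaem s s') hf.aemeasurable]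
    exact lintegral_congr fun t => mul_comm _ _
  have hF1 : ∀ s s' : ℝ, 0 ≤ s → s ≤ s' → s' ≤ φ 1 →
      (∫⁻ u in Ioc s s', ENNReal.ofReal (m2 u)) =
        ∫⁻ t in Ioc (ψ s) (ψ s'), ENNReal.ofReal (m t) := by
    intro s s' hs hss' hs'
    have hfm : Measurable fun t => ENNReal.ofReal (g t + δ) := (hgmeas.add_const δ).ennreal_ofReal
    refine Eq.trans ?_ ((hCoV _ hfm s s' hs hss' hs').trans ?_)
    · exact lintegral_congr fun u => by rw [hm2def]
    · refine lintegral_congr fun t => ?_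
      rw [← ENNReal.ofReal_mul (by linarith [hg0 t] : (0:ℝ) ≤ g t + δ), mul_comm (g t + δ) (h t),
        ← hmh t]
  have hF1sq : ∀ s s' : ℝ, 0 ≤ s → s ≤ s' → s' ≤ φ 1 →
      (∫⁻ u in Ioc s s', ENNReal.ofReal (m2 u ^ 2)) =
        ∫⁻ t in Ioc (ψ s) (ψ s'), ENNReal.ofReal ((g t + δ) * m t) := by
    intro s s' hs hss' hs'
    have hfm : Measurable fun t => ENNReal.ofReal ((g t + δ) ^ 2) :=
      ((hgmeas.add_const δ).pow_const 2).ennreal_ofReal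
    refine Eq.trans ?_ ((hCoV _ hfm s s' hs hss' hs').trans ?_)
    · exact lintegral_congr fun u => by rw [hm2def]
    · refine lintegral_congr fun t => ?_
      rw [← ENNReal.ofReal_mul (by positivity : (0:ℝ) ≤ (g t + δ) ^ 2)]
      congr 1
      rw [hmh t]; ring
  have hmaeIoc : AEMeasurable m (volume.restrict (Ioc (0:ℝ) 1)) := hmIoc.aemeasurable
  have hBnd : ∀ s s' : ℝ, (∫⁻ t in Ioc (ψ s) (ψ s'), ENNReal.ofReal ((g t + δ) * m t)) ≤
      (∫⁻ t in Ioc (0:ℝ) 1, ENNReal.ofReal (g t * m t)) +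
        ENNReal.ofReal δ * ∫⁻ t in Ioc (0:ℝ) 1, ENNReal.ofReal (m t) := by
    intro s s'
    have hsub : Ioc (ψ s) (ψ s') ⊆ Ioc (0:ℝ) 1 := Ioc_subset_Ioc (hψ01 s).1 (hψ01 s').2
    refine le_trans (lintegral_mono_set hsub) ?_
    have hpt : ∀ t, ENNReal.ofReal ((g t + δ) * m t) ≤
        ENNReal.ofReal (g t * m t) + ENNReal.ofReal (δ * m t) := by
      intro t
      calc ENNReal.ofReal ((g t + δ) * m t) = ENNReal.ofReal (g t * m t + δ * m t) := by ring_nf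
      _ ≤ _ := ENNReal.ofReal_add_le
    refine le_trans (lintegral_mono hpt) ?_
    have hme1 : AEMeasurable (fun t => ENNReal.ofReal (g t * m t))
        (volume.restrict (Ioc (0:ℝ) 1)) :=
      ENNReal.measurable_ofReal.comp_aemeasurable (hgmeas.aemeasurable.mul hmaeIoc)
    rw [lintegral_add_left' hme1]
    refine add_le_add le_rfl (le_of_eq ?_)
    have : ∀ t : ℝ, ENNReal.ofReal (δ * m t) = ENNReal.ofReal δ * ENNReal.ofReal (m t) :=
      fun t => ENNReal.ofReal_mul hδ.le
    rw [lintegral_congr this, lintegral_const_mul' _ _ ENNReal.ofReal_ne_top]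
  have hm0ae : 0 ≤ᵐ[volume.restrict (Ioc (0:ℝ) 1)] m :=
    (ae_restrict_iff' measurableSet_Ioc).mpr (ae_of_all _ fun t ht =>
      hm0 t (Ioc_subset_Icc_self ht))
  have hM : (∫⁻ t in Ioc (0:ℝ) 1, ENNReal.ofReal (m t)) ≠ ⊤ :=
    ((hasFiniteIntegral_iff_ofReal hm0ae).mp hmIoc.2).ne
  have hm2fin : (∫⁻ u in Ioc (0:ℝ) (φ 1), ENNReal.ofReal (m2 u)) ≠ ⊤ := by
    rw [hF1 0 (φ 1) le_rfl hT0 le_rfl, hψ0]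
    exact ne_top_of_le_ne_top hM (lintegral_mono_set (Ioc_subset_Ioc le_rfl (hψ01 _).2))
  have hm2Int : IntegrableOn m2 (Ioc 0 (φ 1)) volume := by
    refine ⟨hm2meas.aestronglyMeasurable, ?_⟩
    rw [hasFiniteIntegral_iff_ofReal (ae_of_all _ hm2nn)]
    exact lt_top_iff_ne_top.mpr hm2fin
  have hm2iv : IntervalIntegrable m2 volume 0 (φ 1) :=
    (intervalIntegrable_iff_integrableOn_Ioc_of_le hT0).mpr hm2Int
  have hm2sub : ∀ c d : ℝ, 0 ≤ c → c ≤ d → d ≤ φ 1 → IntervalIntegrable m2 volume c d := by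
    intro c d hc hcd hd
    refine hm2iv.mono_set (uIcc_subset_uIcc_iff_le.mpr ⟨?_, ?_⟩)
    · rw [min_eq_left hT0, min_eq_left hcd]; exact hc
    · rw [max_eq_right hT0, max_eq_right hcd]; exact hd
  have hF3 : ∀ s s' : ℝ, 0 ≤ s → s ≤ s' → s' ≤ φ 1 →
      (∫ u in s..s', m2 u) = ∫ r in (ψ s)..(ψ s'), m r := by
    intro s s' hs hss' hs'
    have hψss : ψ s ≤ ψ s' := hψmono hss'
    rw [intervalIntegral.integral_of_le hss', intervalIntegral.integral_of_le hψss]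
    have hmnn : 0 ≤ᵐ[volume.restrict (Ioc (ψ s) (ψ s'))] m :=
      (ae_restrict_iff' measurableSet_Ioc).mpr (ae_of_all _ fun u hu =>
        hm0 u (hsubIcc s s' hu))
    rw [integral_eq_lintegral_of_nonneg_ae (ae_of_all _ hm2nn)
        hm2meas.aestronglyMeasurable,
      integral_eq_lintegral_of_nonneg_ae hmnn
        (hmIcc.mono_set (hsubIcc s s')).aestronglyMeasurable,
      hF1 s s' hs hss' hs']
  have hspeed : ∀ s t : ℝ, 0 ≤ s → s ≤ t → t ≤ φ 1 →
      dist (γ2 s) (γ2 t) ≤ ∫ r in s..t, m2 r := by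
    intro s t hs hst ht
    rw [hγ2def]
    simp only []
    rw [hΓeq (ψ s) (hψ01 s), hΓeq (ψ t) (hψ01 t), hF3 s t hs hst ht]
    exact hmd (ψ s) (ψ t) (hψ01 s).1 (hψmono hst) (hψ01 t).2
  obtain ⟨P, hPdef⟩ : ∃ P' : ℝ → ℝ, P' = fun u => ∫ r in (0:ℝ)..u, m2 r := ⟨_, rfl⟩
  have hPcont : ContinuousOn P (Icc 0 (φ 1)) := by
    rw [hPdef, show Icc (0:ℝ) (φ 1) = uIcc 0 (φ 1) from (uIcc_of_le hT0).symm]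
    refine intervalIntegral.continuousOn_primitive_interval ?_
    rw [uIcc_of_le hT0, IntegrableOn, Measure.restrict_congr_set Ioc_ae_eq_Icc.symm]
    exact hm2Int
  have hPdiff : ∀ c d : ℝ, 0 ≤ c → c ≤ d → d ≤ φ 1 → P d - P c = ∫ r in c..d, m2 r := by
    intro c d hc hcd hd
    rw [hPdef]; simp only []
    exact intervalIntegral.integral_interval_sub_left
      (hm2sub 0 d le_rfl (hc.trans hcd) hd) (hm2sub 0 c le_rfl hc (hcd.trans hd))
  have hγ2cont : ContinuousOn γ2 (Icc 0 (φ 1)) := by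
    intro u₀ hu₀
    have hb : ∀ u ∈ Icc (0:ℝ) (φ 1), dist (γ2 u) (γ2 u₀) ≤ |P u - P u₀| := by
      intro u hu
      rcases le_total u u₀ with h'|h'
      · have h1 := hspeed u u₀ hu.1 h' hu₀.2
        rw [← hPdiff u u₀ hu.1 h' hu₀.2] at h1
        refine h1.trans ?_
        rw [abs_sub_comm]; exact le_abs_self _
      · have h1 := hspeed u₀ u hu₀.1 h' hu.2
        rw [← hPdiff u₀ u hu₀.1 h' hu.2] at h1
        rw [dist_comm]
        exact h1.trans (le_abs_self _)
    have htend : Tendsto (fun u => |P u - P u₀|) (nhdsWithin u₀ (Icc 0 (φ 1))) (nhds 0) := by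
      have h1 : Tendsto (fun u => P u - P u₀) (nhdsWithin u₀ (Icc 0 (φ 1)))
          (nhds (P u₀ - P u₀)) := (hPcont u₀ hu₀).sub tendsto_const_nhds
      rw [sub_self] at h1
      exact (continuous_abs.tendsto' 0 0 abs_zero).comp h1
    refine tendsto_iff_dist_tendsto_zero.mpr ?_
    refine squeeze_zero' (Eventually.of_forall fun _ => dist_nonneg) ?_ htend
    filter_upwards [self_mem_nhdsWithin] with u hu using hb u hu
  have hGγ2 : ∀ u : ℝ, G (γ2 u) = g (ψ u) := fun u => by
    rw [hγ2def, hgdef]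
  have hsqfin : (∫⁻ u in Ioc (0:ℝ) (φ 1), ENNReal.ofReal (m2 u ^ 2)) ≤
      (∫⁻ t in Ioc (0:ℝ) 1, ENNReal.ofReal (g t * m t)) +
        ENNReal.ofReal δ * ∫⁻ t in Ioc (0:ℝ) 1, ENNReal.ofReal (m t) := by
    rw [hF1sq 0 (φ 1) le_rfl hT0 le_rfl]
    exact hBnd 0 (φ 1)
  have hgmC : (∫⁻ t in Ioc (0:ℝ) 1, ENNReal.ofReal (g t * m t)) =
      ∫⁻ t in Ioc (0:ℝ) 1, ENNReal.ofReal (m t * G (γ t)) :=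
    setLIntegral_congr_fun measurableSet_Ioc (fun t ht => by
      rw [hgdef]; simp only []; rw [hΓeq t (Ioc_subset_Icc_self ht), mul_comm])
  have hTpos : 0 < φ 1 := by
    rcases lt_or_eq_of_le hT0 with h'|h'
    · exact h'
    · exfalso
      apply hmne
      have hnn : 0 ≤ᵐ[volume.restrict (Ioc (0:ℝ) 1)] h :=
        (ae_restrict_iff' measurableSet_Ioc).mpr (ae_of_all _ fun u hu =>
          hh0 u (Ioc_subset_Icc_self hu))
      have hint0 : (∫ u in Ioc (0:ℝ) 1, h u) = 0 := by
        have hs := hφsub 0 1 le_rfl zero_le_one le_rfl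
        rw [hφ0, ← h', intervalIntegral.integral_of_le zero_le_one] at hs
        linarith
      have hhae := (integral_eq_zero_iff_of_nonneg_ae hnn
        (hhsub 0 1 le_rfl zero_le_one le_rfl).1).mp hint0
      filter_upwards [hhae] with u hu
      simp [hmh u, hu]
  have hsqne : (∫⁻ u in Ioc (0:ℝ) (φ 1), ENNReal.ofReal (m2 u ^ 2)) ≠ ⊤ := by
    refine ne_top_of_le_ne_top ?_ hsqfin
    rw [hgmC]
    exact ENNReal.add_ne_top.mpr ⟨hC, ENNReal.mul_ne_top ENNReal.ofReal_ne_top hM⟩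
  have hsqInt : IntervalIntegrable (fun u => m2 u ^ 2) volume 0 (φ 1) := by
    refine (intervalIntegrable_iff_integrableOn_Ioc_of_le hT0).mpr ?_
    refine ⟨(hm2meas.pow_const 2).aestronglyMeasurable, ?_⟩
    rw [hasFiniteIntegral_iff_ofReal (ae_of_all _ fun u => sq_nonneg (m2 u))]
    exact lt_top_iff_ne_top.mpr hsqne
  have hval : (∫⁻ u in Ioc (0:ℝ) (φ 1),
      ENNReal.ofReal ((1/2) * m2 u ^ 2 + (1/2) * (G (γ2 u)) ^ 2)) ≤
      (∫⁻ t in Ioc (0:ℝ) 1, ENNReal.ofReal (m t * G (γ t))) +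
        ENNReal.ofReal δ * ∫⁻ t in Ioc (0:ℝ) 1, ENNReal.ofReal (m t) := by
    have hpt : ∀ u, ENNReal.ofReal ((1/2) * m2 u ^ 2 + (1/2) * (G (γ2 u)) ^ 2) ≤
        ENNReal.ofReal (m2 u ^ 2) := by
      intro u
      refine ENNReal.ofReal_le_ofReal ?_
      rw [hGγ2 u]
      have hm2u : m2 u = g (ψ u) + δ := by rw [hm2def]
      rw [hm2u]
      nlinarith [hg0 (ψ u), hδ]
    refine le_trans (lintegral_mono hpt) ?_
    rw [← hgmC]
    exact hsqfin
  refine le_trans (iInf₂_le (φ 1) hTpos) ?_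
  refine le_trans (sInf_le ?_) hval
  refine ⟨γ2, m2, hγ2cont, ?_, ?_, ⟨fun r _ => hm2nn r, hm2iv, hspeed⟩, hsqInt, rfl⟩
  · rw [hγ2def]; simp only []; rw [hψ0, hΓeq 0 ⟨le_rfl, zero_le_one⟩, h0]
  · rw [hγ2def]; simp only []
    rw [hΓeq (ψ (φ 1)) (hψ01 _), hcollapse 1 ⟨zero_le_one, le_rfl⟩, h1]

lemma action_le_finsler {X : Type*} [MetricSpace X] [MeasurableSpace X] [BorelSpace X]
    (G : X → ℝ) (hG0 : ∀ x, 0 ≤ G x) (hGmeas : Measurable G) (x y : X)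
    (γ : ℝ → X) (m : ℝ → ℝ) (hγ : ContinuousOn γ (Set.Icc 0 1))
    (h0 : γ 0 = x) (h1 : γ 1 = y) (hup : IsUpperSpeedOn γ m 0 1) :
    (⨅ (T : ℝ) (_ : 0 < T), actionCost G T x y) ≤
      ∫⁻ t in Set.Ioc (0:ℝ) 1, ENNReal.ofReal (m t * G (γ t)) := by
  obtain ⟨hm0, hmi, hmd⟩ := hup
  by_cases hC : (∫⁻ t in Set.Ioc (0:ℝ) 1, ENNReal.ofReal (m t * G (γ t))) = ⊤
  · rw [hC]; exact le_top
  by_cases hm : m =ᵐ[volume.restrict (Set.Ioc (0:ℝ) 1)] 0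
  · have hxy : x = y := by
      have hd := hmd 0 1 le_rfl zero_le_one le_rfl
      rw [intervalIntegral.integral_of_le zero_le_one, integral_eq_zero_of_ae hm] at hd
      rw [← h0, ← h1]
      exact dist_le_zero.mp hd
    subst hxy
    have hconst : ∀ T : ℝ, 0 < T → actionCost G T x x ≤
        ENNReal.ofReal ((1/2) * (G x)^2) * ENNReal.ofReal T := by
      intro T hT
      refine le_trans (sInf_le ⟨fun _ => x, fun _ => 0, continuousOn_const, rfl, rfl,
        ⟨fun r _ => le_rfl, intervalIntegrable_const, fun s t hs hst ht => by simp⟩,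
        by simp only [ne_eq, OfNat.ofNat_ne_zero, not_false_eq_true, zero_pow]
           exact intervalIntegrable_const,
        rfl⟩) ?_
      rw [setLIntegral_const, Real.volume_Ioc, sub_zero]
      apply le_of_eq
      congr 1
      norm_num
    have h1' : Tendsto (fun T : ℝ => ENNReal.ofReal T) (nhdsWithin 0 (Set.Ioi 0)) (nhds 0) := by
      have h2 := ENNReal.continuous_ofReal.tendsto (0:ℝ)
      rw [ENNReal.ofReal_zero] at h2
      exact h2.mono_left nhdsWithin_le_nhds
    have htend : Tendsto (fun T : ℝ => ENNReal.ofReal ((1/2) * (G x)^2) * ENNReal.ofReal T)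
        (nhdsWithin 0 (Set.Ioi 0)) (nhds 0) := by
      have h3 := ENNReal.Tendsto.const_mul (a := ENNReal.ofReal ((1/2) * (G x)^2)) h1'
        (Or.inr ENNReal.ofReal_ne_top)
      simpa using h3
    have hev : ∀ᶠ T in nhdsWithin (0:ℝ) (Set.Ioi 0),
        (⨅ (T : ℝ) (_ : 0 < T), actionCost G T x x) ≤
          ENNReal.ofReal ((1/2) * (G x)^2) * ENNReal.ofReal T := by
      filter_upwards [self_mem_nhdsWithin] with T hT
      exact le_trans (iInf₂_le T hT) (hconst T hT)
    exact le_trans (ge_of_tendsto htend hev) zero_le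
  · have hM : (∫⁻ t in Set.Ioc (0:ℝ) 1, ENNReal.ofReal (m t)) ≠ ⊤ := by
      have hm0ae : 0 ≤ᵐ[volume.restrict (Set.Ioc (0:ℝ) 1)] m :=
        (ae_restrict_iff' measurableSet_Ioc).mpr (ae_of_all _ fun t ht =>
          hm0 t (Set.Ioc_subset_Icc_self ht))
      exact ((hasFiniteIntegral_iff_ofReal hm0ae).mp hmi.1.2).ne
    have h1' : Tendsto (fun δ : ℝ => ENNReal.ofReal δ) (nhdsWithin 0 (Set.Ioi 0)) (nhds 0) := by
      have h2 := ENNReal.continuous_ofReal.tendsto (0:ℝ)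
      rw [ENNReal.ofReal_zero] at h2
      exact h2.mono_left nhdsWithin_le_nhds
    have htend : Tendsto (fun δ : ℝ =>
        (∫⁻ t in Set.Ioc (0:ℝ) 1, ENNReal.ofReal (m t * G (γ t))) +
          ENNReal.ofReal δ * ∫⁻ t in Set.Ioc (0:ℝ) 1, ENNReal.ofReal (m t))
        (nhdsWithin 0 (Set.Ioi 0))
        (nhds (∫⁻ t in Set.Ioc (0:ℝ) 1, ENNReal.ofReal (m t * G (γ t)))) := by
      have h3 := ENNReal.Tendsto.mul_const h1' (Or.inr hM)
      rw [zero_mul] at h3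
      have h4 := h3.const_add (∫⁻ t in Set.Ioc (0:ℝ) 1, ENNReal.ofReal (m t * G (γ t)))
      rwa [add_zero] at h4
    have hev : ∀ᶠ δ in nhdsWithin (0:ℝ) (Set.Ioi 0),
        (⨅ (T : ℝ) (_ : 0 < T), actionCost G T x y) ≤
          (∫⁻ t in Set.Ioc (0:ℝ) 1, ENNReal.ofReal (m t * G (γ t))) +
            ENNReal.ofReal δ * ∫⁻ t in Set.Ioc (0:ℝ) 1, ENNReal.ofReal (m t) := by
      filter_upwards [self_mem_nhdsWithin] with δ hδ
      exact action_key G hG0 hGmeas x y γ m hγ h0 h1 hm0 hmi hmd hC hm hδ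
    exact ge_of_tendsto htend hev

/-- For a metric space `X` and a Borel function `G : X → [0,∞)`,
the Finsler cost equals the infimum over horizons `T > 0` of the action `E_G^T`. -/
theorem finslerCost_eq_iInf_actionCost {X : Type*} [MetricSpace X]
    [MeasurableSpace X] [BorelSpace X]
    (G : X → ℝ) (hG0 : ∀ x, 0 ≤ G x) (hGmeas : Measurable G) (x y : X) :
    finslerCost G x y = ⨅ (T : ℝ) (_ : 0 < T), actionCost G T x y := by
  refine le_antisymm ?_ ?_
  · refine le_iInf fun T => le_iInf fun hT => ?_
    refine le_sInf fun c hc => ?_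
    obtain ⟨γ, m, hγ, h0, h1, hup, hsq, rfl⟩ := hc
    exact finsler_le_of_action G hGmeas x y hT γ m hγ h0 h1 hup
  · refine le_sInf fun c hc => ?_
    obtain ⟨γ, m, hγ, h0, h1, hup, rfl⟩ := hc
    exact action_le_finsler G hG0 hGmeas x y γ m hγ h0 h1 hup
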